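/- Let p ∈ [1, ∞], let β ∈ W^{1,p}(I, S²), and let v ∈ ℝ³ satisfy v · β(0) = 0. Then the map t ↦ Π_{β|_(0,t)} v belongs to W^{1,p}(I, ℝ³). -/

import Mathlib

open MeasureTheory Set Filter Matrix
open scoped RealInnerProductSpace Topology ENNReal NNReal

noncomputable section

/-- Euclidean 3-space. -/
abbrev E3 : Type := EuclideanSpace ℝ (Fin 3)

/-- Cross product on `ℝ³`. -/
def cross3 (v w : E3) : E3 :=
  (WithLp.equiv 2 (Fin 3 → ℝ)).symm
    ![v 1 * w 2 - v 2 * w 1, v 2 * w 0 - v 0 * w 2, v 0 * w 1 - v 1 * w 0]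

/-- The `i`-th row of a 3×3 matrix, as a vector in `ℝ³`; for `r ∈ SO(3)` this is `rᵀ eᵢ`. -/
def row3 (M : Matrix (Fin 3) (Fin 3) ℝ) (i : Fin 3) : E3 :=
  (WithLp.equiv 2 (Fin 3 → ℝ)).symm (M i)

/-- The set of rotation matrices. -/
def SO3 : Set (Matrix (Fin 3) (Fin 3) ℝ) :=
  {M | M * Mᵀ = 1 ∧ M.det = 1}

/-- Lebesgue measure restricted to the unit interval `I = (0,1)`. -/
def muI : Measure ℝ := volume.restrict (Set.Ioo 0 1)

/-- `f` is absolutely continuous on `[a,b]` with (a.e.) derivative `f'` (fundamental theorem of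
calculus form); this encodes `f ∈ W^{1,1}((a,b))` via its continuous representative. -/
def FTCOn (f f' : ℝ → E3) (a b : ℝ) : Prop :=
  IntervalIntegrable f' volume a b ∧
  ∀ t ∈ Set.Icc a b, f t = f a + ∫ s in a..t, f' s

/-- `V` is the parallel transport of `v` along the spherical curve `β` (with derivative `β'`)
on `[a,b]`: the absolutely continuous solution of `V' = -(V·β')β`, `V a = v`, in integral form.
`V t` is the quantity denoted `Π_{β|_(a,t)} v`. -/
def IsParTrans (β β' : ℝ → E3) (a b : ℝ) (v : E3) (V : ℝ → E3) : Prop :=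
  V a = v ∧
  IntervalIntegrable (fun s => ⟪V s, β' s⟫ • β s) volume a b ∧
  ∀ t ∈ Set.Icc a b, V t = v - ∫ s in a..t, ⟪V s, β' s⟫ • β s

/-- If `β ∈ W^{1,p}(I, S²)` and `v · β(0) = 0`, then the parallel transport
`t ↦ Π_{β|_(0,t)} v` belongs to `W^{1,p}(I, ℝ³)`. -/
theorem statement3
    (p : ℝ≥0∞) (hp : 1 ≤ p)
    (β β' : ℝ → E3)
    (hβ : FTCOn β β' 0 1)
    (hsphere : ∀ t ∈ Set.Icc (0:ℝ) 1, ‖β t‖ = 1)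
    (hLp : MemLp β' p muI)
    (v : E3) (hv : ⟪v, β 0⟫ = 0)
    (V : ℝ → E3) (hV : IsParTrans β β' 0 1 v V) :
    ∃ V' : ℝ → E3, FTCOn V V' 0 1 ∧ MemLp V' p muI := by
  obtain ⟨hV0, hInt, hVeq⟩ := hV
  set f : ℝ → E3 := fun s => ⟪V s, β' s⟫ • β s with hf
  refine ⟨fun s => -f s, ⟨hInt.neg, ?_⟩, ?_⟩
  · intro t ht
    have := hVeq t ht
    have h0 : V 0 = v := hV0
    rw [this, h0, intervalIntegral.integral_neg]
    abel
  · -- Memℒp of V' = -f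
    set W : ℝ → E3 := fun t => v - ∫ s in (0:ℝ)..t, f s with hW
    have hWc : ContinuousOn W (Set.Icc 0 1) := by
      have : ContinuousOn (fun t => ∫ s in (0:ℝ)..t, f s) (Set.uIcc 0 1) :=
        intervalIntegral.continuousOn_primitive_interval' hInt left_mem_uIcc
      rw [Set.uIcc_of_le (by norm_num : (0:ℝ) ≤ 1)] at this
      exact continuousOn_const.sub this
    obtain ⟨C, hC⟩ := isCompact_Icc.exists_bound_of_continuousOn hWc
    have hC0 : 0 ≤ C := le_trans (norm_nonneg _) (hC 0 (by norm_num))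
    have hVW : ∀ t ∈ Set.Icc (0:ℝ) 1, V t = W t := fun t ht => hVeq t ht
    have hsub : Set.Ioo (0:ℝ) 1 ⊆ Set.Icc 0 1 := Set.Ioo_subset_Icc_self
    -- measurability
    have hWm : AEStronglyMeasurable W muI :=
      (hWc.mono hsub).aestronglyMeasurable measurableSet_Ioo
    have hVm : AEStronglyMeasurable V muI := by
      refine hWm.congr ?_
      exact (ae_restrict_iff' measurableSet_Ioo).2 (ae_of_all _ fun t ht => (hVW t (hsub ht)).symm)
    have hβ'm : AEStronglyMeasurable β' muI := hLp.aestronglyMeasurable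
    have hβm : AEStronglyMeasurable β muI := by
      obtain ⟨hβint, hβeq⟩ := hβ
      have hBc : ContinuousOn (fun t => β 0 + ∫ s in (0:ℝ)..t, β' s) (Set.Icc 0 1) := by
        have : ContinuousOn (fun t => ∫ s in (0:ℝ)..t, β' s) (Set.uIcc 0 1) :=
          intervalIntegral.continuousOn_primitive_interval' hβint left_mem_uIcc
        rw [Set.uIcc_of_le (by norm_num : (0:ℝ) ≤ 1)] at this
        exact continuousOn_const.add this
      refine ((hBc.mono hsub).aestronglyMeasurable measurableSet_Ioo).congr ?_
      exact (ae_restrict_iff' measurableSet_Ioo).2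
        (ae_of_all _ fun t ht => (hβeq t (hsub ht)).symm)
    have hfm : AEStronglyMeasurable (fun s => -f s) muI := by
      exact ((hVm.inner (𝕜 := ℝ) hβ'm).smul hβm).neg
    refine MemLp.of_le (hLp.const_smul C) hfm ?_
    refine (ae_restrict_iff' measurableSet_Ioo).2 (ae_of_all _ fun t ht => ?_)
    have htI := hsub ht
    have h1 : ‖-f t‖ = |⟪V t, β' t⟫| * ‖β t‖ := by
      rw [norm_neg, hf]; simp [norm_smul, Real.norm_eq_abs]
    have h2 : ‖-f t‖ ≤ ‖V t‖ * ‖β' t‖ := by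
      rw [h1, hsphere t htI, mul_one]
      exact abs_real_inner_le_norm _ _
    have h3 : ‖V t‖ ≤ C := by rw [hVW t htI]; exact hC t htI
    calc ‖-f t‖ ≤ ‖V t‖ * ‖β' t‖ := h2
      _ ≤ C * ‖β' t‖ := by gcongr
      _ = ‖(C • β') t‖ := by simp [norm_smul, abs_of_nonneg hC0]
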